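/- Let R be a commutative ring with unity. For all ideals I, J of R, ε(IJ) = ε(I)ε(J); in particular ε is a multiplicative homomorphism from the semigroup of ideals of R onto the semilattice of idempotent ideals of R, and ε(e) = e for every idempotent ideal e. -/

import Mathlib

/-- `eps I` is the sum (supremum) of all idempotent ideals of `R` contained in
the ideal `I`. -/
def eps {R : Type*} [CommRing R] (I : Ideal R) : Ideal R :=
  sSup {J : Ideal R | J * J = J ∧ J ≤ I}

lemma eps_le {R : Type*} [CommRing R] (I : Ideal R) : eps I ≤ I :=
  sSup_le fun _ h => h.2

lemma le_eps {R : Type*} [CommRing R] {I J : Ideal R} (h1 : J * J = J) (h2 : J ≤ I) :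
    J ≤ eps I :=
  le_sSup ⟨h1, h2⟩

lemma eps_idem {R : Type*} [CommRing R] (I : Ideal R) : eps I * eps I = eps I := by
  apply le_antisymm
  · exact Ideal.mul_le_left
  · refine sSup_le fun J hJ => ?_
    calc J = J * J := hJ.1.symm
    _ ≤ eps I * eps I := Ideal.mul_mono (le_sSup hJ) (le_sSup hJ)

lemma eps_mono {R : Type*} [CommRing R] {I J : Ideal R} (h : I ≤ J) : eps I ≤ eps J :=
  sSup_le fun _ hK => le_sSup ⟨hK.1, hK.2.trans h⟩

lemma eps_of_idem {R : Type*} [CommRing R] {e : Ideal R} (h : e * e = e) : eps e = e :=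
  le_antisymm (eps_le e) (le_eps h le_rfl)

theorem eps_mul {R : Type*} [CommRing R] :
    (∀ I J : Ideal R, eps (I * J) = eps I * eps J) ∧
    (∀ I : Ideal R, eps I * eps I = eps I) ∧
    (∀ e : Ideal R, e * e = e → eps e = e) := by
  refine ⟨fun I J => ?_, eps_idem, fun e h => eps_of_idem h⟩
  apply le_antisymm
  · calc eps (I * J) = eps (I * J) * eps (I * J) := (eps_idem _).symm
    _ ≤ eps I * eps J := Ideal.mul_mono
        (eps_mono Ideal.mul_le_left)
        (eps_mono Ideal.mul_le_right)
  · refine le_eps ?_ (Ideal.mul_mono (eps_le I) (eps_le J))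
    calc eps I * eps J * (eps I * eps J)
        = (eps I * eps I) * (eps J * eps J) := by ring
    _ = eps I * eps J := by rw [eps_idem, eps_idem]
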